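/- arXiv:0903.3812 — 2 statements merged into one kernel-verified Lean document; each statement's English description precedes it below -/
import Mathlib

section
/- Let r, q be integers with 4 ≤ q < r+3, and suppose F_v(2_r; q) + 1 ≥ R(q−1, 3), where R denotes the Ramsey number. Then F_v(2_r; q−1) ≥ F_v(2_r; q) + 2. -/
/-- The chromatic number of `G` as a natural number. -/
noncomputable def chi {V : Type*} (G : SimpleGraph V) : ℕ := G.chromaticNumber.toNat

/-- The independence number of `G`: the clique number of the complement. -/
noncomputable def indepNum {V : Type*} (G : SimpleGraph V) : ℕ := Gᶜ.cliqueNum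

/-- The vertex Folkman number `F_v(2_r; q)`: the minimum number of vertices of a
graph with clique number `< q` and chromatic number `≥ r + 1`. -/
noncomputable def Fv (r q : ℕ) : ℕ :=
  sInf {n | ∃ G : SimpleGraph (Fin n), G.cliqueNum < q ∧ r + 1 ≤ chi G}

/-- The Ramsey number `R(p, 3)`: the least `n` such that every graph on at least `n`
vertices contains a `p`-clique or an independent set of size `3`. -/
noncomputable def RamseyTri (p : ℕ) : ℕ :=
  sInf {n | ∀ m, n ≤ m → ∀ G : SimpleGraph (Fin m),
    (∃ S : Finset (Fin m), G.IsNClique p S) ∨ (∃ S : Finset (Fin m), Gᶜ.IsNClique 3 S)}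

section Aux

set_option linter.unusedSectionVars false

open SimpleGraph Finset

open SimpleGraph Finset

variable {V : Type} {W : Type}

lemma colorable_of_hom {G : SimpleGraph V} {H : SimpleGraph W} (f : G →g H) {n : ℕ}
    (h : H.Colorable n) : G.Colorable n := h.elim fun C => ⟨C.comp f⟩

lemma chi_ge_iff {G : SimpleGraph V} [Fintype V] {r : ℕ} :
    r + 1 ≤ chi G ↔ ¬ G.Colorable r := by
  have hne : G.chromaticNumber ≠ ⊤ :=
    SimpleGraph.chromaticNumber_ne_top_iff_exists.2 ⟨_, G.colorable_of_fintype⟩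
  have hcoe : G.chromaticNumber = (chi G : ℕ∞) := (ENat.coe_toNat hne).symm
  rw [← SimpleGraph.chromaticNumber_le_iff_colorable, hcoe, Nat.cast_le, not_le]
  omega

lemma cliqueNum_lt_iff_cliqueFree {G : SimpleGraph V} [Fintype V] {q : ℕ} :
    G.cliqueNum < q ↔ G.CliqueFree q := by
  constructor
  · intro h S hS
    have := @SimpleGraph.IsClique.card_le_cliqueNum _ G _ S hS.isClique
    have := hS.card_eq
    omega
  · intro h
    by_contra hle
    push_neg at hle
    obtain ⟨S, hS⟩ := G.exists_isNClique_cliqueNum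
    obtain ⟨T, hTS, hT⟩ := Finset.exists_subset_card_eq (hS.card_eq ▸ hle)
    exact h T ⟨hS.isClique.subset hTS, hT⟩


lemma ramsey_exists (p : ℕ) : ∃ n : ℕ, ∀ (V : Type) (_ : Fintype V) (G : SimpleGraph V),
    n ≤ Fintype.card V →
    (∃ S : Finset V, G.IsNClique p S) ∨ (∃ S : Finset V, Gᶜ.IsNClique 3 S) := by
  induction p with
  | zero => exact ⟨0, fun V _ G _ => Or.inl ⟨∅, SimpleGraph.isNClique_empty.2 rfl⟩⟩
  | succ p ih =>
    obtain ⟨n, hn⟩ := ih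
    refine ⟨n + p + 2, fun V hV G hcard => ?_⟩
    classical
    have hne : Nonempty V := Fintype.card_pos_iff.1 (by omega)
    obtain ⟨v⟩ := hne
    set s := G.neighborFinset v with hs
    have hvs : v ∉ s := by simp [hs]
    have hadj : ∀ x : {x : V // x ∈ s}, G.Adj v (x : V) :=
      fun x => (G.mem_neighborFinset v (x : V)).1 x.2
    by_cases hbig : n ≤ s.card
    · -- look inside the neighborhood
      have hct : Fintype.card {x : V // x ∈ s} = s.card := Fintype.card_coe s
      rcases hn {x : V // x ∈ s} inferInstance (G.comap (fun x => (x : V))) (by omega) with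
        ⟨S, hS⟩ | ⟨S, hS⟩
      · refine Or.inl ⟨insert v (S.image Subtype.val), ?_, ?_⟩
        · intro a ha b hb hab
          simp only [Finset.coe_insert, Set.mem_insert_iff, Finset.coe_image, Set.mem_image,
            Finset.mem_coe] at ha hb
          rcases ha with rfl | ⟨x, hx, rfl⟩
          · rcases hb with rfl | ⟨y, hy, rfl⟩
            · exact absurd rfl hab
            · exact hadj y
          · rcases hb with rfl | ⟨y, hy, rfl⟩
            · exact (hadj x).symm
            · exact hS.isClique hx hy (fun h => hab (congrArg Subtype.val h))
        · rw [Finset.card_insert_of_notMem, Finset.card_image_of_injective _ Subtype.val_injective,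
            hS.card_eq]
          intro hmem
          simp only [Finset.mem_image] at hmem
          obtain ⟨x, _, hx⟩ := hmem
          exact hvs (hx ▸ x.2)
      · refine Or.inr ⟨S.image Subtype.val, ?_, ?_⟩
        · intro a ha b hb hab
          simp only [Finset.coe_image, Set.mem_image, Finset.mem_coe] at ha hb
          obtain ⟨x, hx, rfl⟩ := ha
          obtain ⟨y, hy, rfl⟩ := hb
          have hxy : x ≠ y := fun h => hab (congrArg Subtype.val h)
          have := hS.isClique hx hy hxy
          simp only [SimpleGraph.compl_adj, SimpleGraph.comap_adj] at this ⊢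
          exact ⟨hab, this.2⟩
        · rw [Finset.card_image_of_injective _ Subtype.val_injective, hS.card_eq]
    · -- non-neighborhood
      set Wf := (Finset.univ \ insert v s) with hW
      have hWcard : p + 1 ≤ Wf.card := by
        rw [hW, Finset.card_sdiff_of_subset (Finset.subset_univ _), Finset.card_univ]
        have := Finset.card_insert_le v s
        omega
      by_cases hpair : ∃ x ∈ Wf, ∃ y ∈ Wf, x ≠ y ∧ ¬ G.Adj x y
      · obtain ⟨x, hx, y, hy, hxy, hnadj⟩ := hpair
        have hxv : x ≠ v := by rw [hW] at hx; simp at hx; tauto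
        have hyv : y ≠ v := by rw [hW] at hy; simp at hy; tauto
        have hxns : x ∉ s := by rw [hW] at hx; simp at hx; tauto
        have hyns : y ∉ s := by rw [hW] at hy; simp at hy; tauto
        have h1 : ¬ G.Adj v x := fun h => hxns ((G.mem_neighborFinset v x).2 h)
        have h2 : ¬ G.Adj x v := fun h => h1 h.symm
        have h3 : ¬ G.Adj v y := fun h => hyns ((G.mem_neighborFinset v y).2 h)
        have h4 : ¬ G.Adj y v := fun h => h3 h.symm
        have h5 : ¬ G.Adj x y := hnadj
        have h6 : ¬ G.Adj y x := fun h => h5 h.symm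
        refine Or.inr ⟨{v, x, y}, ?_, ?_⟩
        · intro a ha b hb hab
          simp only [Finset.coe_insert, Set.mem_insert_iff, Finset.coe_singleton,
            Set.mem_singleton_iff] at ha hb
          rcases ha with ha | ha | ha <;> rcases hb with hb | hb | hb <;> subst ha <;> subst hb <;>
            simp only [SimpleGraph.compl_adj] <;> exact ⟨hab, by tauto⟩
        · exact Finset.card_eq_three.2 ⟨v, x, y, Ne.symm hxv, Ne.symm hyv, hxy, rfl⟩
      · push_neg at hpair
        obtain ⟨T, hTW, hT⟩ := Finset.exists_subset_card_eq hWcard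
        refine Or.inl ⟨T, ?_, hT⟩
        intro a ha b hb hab
        exact hpair a (hTW ha) b (hTW hb) hab


/-- the shift graph on pairs -/
def shiftGraph (N : ℕ) : SimpleGraph (Fin N × Fin N) where
  Adj p q := (p.2.val = q.1.val ∧ p.1.val < p.2.val ∧ q.1.val < q.2.val) ∨
    (q.2.val = p.1.val ∧ q.1.val < q.2.val ∧ p.1.val < p.2.val)
  symm := by constructor; intro p q h; tauto
  loopless := by constructor; intro p h; omega

lemma shiftGraph_cliqueFree (N : ℕ) : (shiftGraph N).CliqueFree 3 := by
  intro S hS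
  obtain ⟨a, b, c, hab, hac, hbc, rfl⟩ := Finset.card_eq_three.1 hS.card_eq
  have h1 := hS.isClique (by simp) (by simp [Finset.mem_insert]) hab
  have h2 := hS.isClique (by simp) (by simp [Finset.mem_insert]) hac
  have h3 := hS.isClique (by simp [Finset.mem_insert]) (by simp [Finset.mem_insert]) hbc
  simp only [shiftGraph] at h1 h2 h3
  omega

lemma shiftGraph_not_colorable (r : ℕ) : ¬ (shiftGraph (2 ^ r + 1)).Colorable r := by
  set N := 2 ^ r + 1 with hN
  rintro ⟨C⟩
  set f : Fin N → Finset (Fin r) :=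
    fun i => (Finset.univ.filter (fun j => i.val < j.val)).image (fun j => C (i, j)) with hf
  have key : ∀ i i' : Fin N, i.val < i'.val → f i ≠ f i' := by
    intro i i' hlt heq
    have hc : C (i, i') ∈ f i := by
      rw [hf]
      exact Finset.mem_image.2 ⟨i', Finset.mem_filter.2 ⟨Finset.mem_univ _, hlt⟩, rfl⟩
    rw [heq, hf] at hc
    obtain ⟨j, hj, hCj⟩ := Finset.mem_image.1 hc
    have hj' : i'.val < j.val := (Finset.mem_filter.1 hj).2
    have hadj : (shiftGraph N).Adj (i, i') (i', j) := Or.inl ⟨rfl, hlt, hj'⟩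
    exact C.valid hadj hCj.symm
  have hinj : Function.Injective f := by
    intro i i' h
    rcases lt_trichotomy i.val i'.val with hlt | heq | hlt
    · exact absurd h (key _ _ hlt)
    · exact Fin.ext heq
    · exact absurd h.symm (key _ _ hlt)
  have := Fintype.card_le_of_injective f hinj
  rw [Fintype.card_finset, Fintype.card_fin, Fintype.card_fin] at this
  omega

/-- transfer a graph to a `Fin` vertex type -/
lemma to_fin {V : Type} [Fintype V] (G : SimpleGraph V) :
    ∃ H : SimpleGraph (Fin (Fintype.card V)),
      (∀ n, H.CliqueFree n ↔ G.CliqueFree n) ∧ (∀ n, H.Colorable n ↔ G.Colorable n) := by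
  classical
  set e : Fin (Fintype.card V) ≃ V := (Fintype.equivFin V).symm with he
  have ι : (G.comap e.toEmbedding) ≃g G := SimpleGraph.Iso.comap e G
  refine ⟨G.comap e.toEmbedding, fun n => ⟨?_, ?_⟩, fun n => ⟨?_, ?_⟩⟩
  · intro h
    exact SimpleGraph.CliqueFree.comap ι.symm.toEmbedding.isContained h
  · intro h
    exact SimpleGraph.CliqueFree.comap ι.toEmbedding.isContained h
  · intro ⟨C⟩
    exact ⟨C.comp ι.symm.toHom⟩
  · intro ⟨C⟩
    exact ⟨C.comp ι.toHom⟩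


variable {V : Type} [Fintype V] [DecidableEq V]

/-- contraction of an independent set `t` (with representative `a ∈ t`) to a point -/
def contract (G : SimpleGraph V) (t : Finset V) (a : V) :
    SimpleGraph {x : V // x = a ∨ x ∉ t} where
  Adj x y := x ≠ y ∧ ∃ u v : V, (u = x.1 ∨ (x.1 = a ∧ u ∈ t)) ∧
    (v = y.1 ∨ (y.1 = a ∧ v ∈ t)) ∧ G.Adj u v
  symm := by
    constructor
    rintro x y ⟨hne, u, v, hu, hv, hadj⟩
    exact ⟨hne.symm, v, u, hv, hu, hadj.symm⟩
  loopless := by constructor; rintro x ⟨hne, -⟩; exact hne rfl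

lemma contract_card {t : Finset V} {a : V} (ha : a ∈ t) :
    Fintype.card {x : V // x = a ∨ x ∉ t} = Fintype.card V - t.card + 1 := by
  classical
  rw [Fintype.card_subtype]
  have : (Finset.univ.filter (fun x => x = a ∨ x ∉ t)) = insert a (Finset.univ \ t) := by
    ext x; simp
  rw [this, Finset.card_insert_of_notMem (by simp [ha]),
    Finset.card_sdiff_of_subset (Finset.subset_univ _), Finset.card_univ]

lemma contract_colorable {G : SimpleGraph V} {t : Finset V} {a : V} (ha : a ∈ t)
    (hind : ∀ x ∈ t, ∀ y ∈ t, ¬ G.Adj x y) {n : ℕ}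
    (h : (contract G t a).Colorable n) : G.Colorable n := by
  obtain ⟨C⟩ := h
  set ρ : V → {x : V // x = a ∨ x ∉ t} :=
    fun x => if h : x ∈ t then ⟨a, Or.inl rfl⟩ else ⟨x, Or.inr h⟩ with hρ
  refine ⟨SimpleGraph.Coloring.mk (fun x => C (ρ x)) ?_⟩
  intro x y hadj
  have hmain : (contract G t a).Adj (ρ x) (ρ y) := by
    constructor
    · -- ρ x ≠ ρ y
      intro hc
      by_cases hx : x ∈ t <;> by_cases hy : y ∈ t
      · exact hind x hx y hy hadj
      · have : (ρ x).1 = a := by simp [hρ, hx]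
        have h2 : (ρ y).1 = y := by simp [hρ, hy]
        rw [hc] at this
        rw [h2] at this
        exact hy (this ▸ ha)
      · have : (ρ y).1 = a := by simp [hρ, hy]
        have h2 : (ρ x).1 = x := by simp [hρ, hx]
        rw [← hc] at this
        rw [h2] at this
        exact hx (this ▸ ha)
      · have h1 : (ρ x).1 = x := by simp [hρ, hx]
        have h2 : (ρ y).1 = y := by simp [hρ, hy]
        apply hadj.ne
        rw [← h1, ← h2, hc]
    · refine ⟨x, y, ?_, ?_, hadj⟩
      · by_cases hx : x ∈ t
        · exact Or.inr ⟨by simp [hρ, hx], hx⟩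
        · exact Or.inl (by simp [hρ, hx])
      · by_cases hy : y ∈ t
        · exact Or.inr ⟨by simp [hρ, hy], hy⟩
        · exact Or.inl (by simp [hρ, hy])
  exact C.valid hmain

lemma contract_cliqueFree {G : SimpleGraph V} {t : Finset V} {a : V} {q : ℕ}
    (hfree : G.CliqueFree q) : (contract G t a).CliqueFree (q + 1) := by
  intro S hS
  classical
  set B := S.filter (fun x => x.1 ≠ a) with hB
  have hsplit := Finset.card_filter_add_card_filter_not
    (s := S) (p := fun x => x.1 ≠ a)
  have hone : (S.filter (fun x => ¬ x.1 ≠ a)).card ≤ 1 := by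
    apply Finset.card_le_one.2
    intro x hx y hy
    simp only [Finset.mem_filter, not_not] at hx hy
    exact Subtype.ext (hx.2.trans hy.2.symm)
  have hBcard : q ≤ B.card := by rw [hB]; rw [hS.card_eq] at hsplit; omega
  have himage : q ≤ (B.image Subtype.val).card := by
    rwa [Finset.card_image_of_injective _ Subtype.val_injective]
  obtain ⟨T, hTB, hT⟩ := Finset.exists_subset_card_eq himage
  refine hfree T ⟨?_, hT⟩
  intro u hu v hv huv
  obtain ⟨x, hx, rfl⟩ := Finset.mem_image.1 (hTB hu)
  obtain ⟨y, hy, rfl⟩ := Finset.mem_image.1 (hTB hv)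
  have hxa : x.1 ≠ a := (Finset.mem_filter.1 hx).2
  have hya : y.1 ≠ a := (Finset.mem_filter.1 hy).2
  have hxy : x ≠ y := fun h => huv (congrArg Subtype.val h)
  obtain ⟨-, u', v', hu', hv', hadj⟩ :=
    hS.isClique (Finset.mem_filter.1 hx).1 (Finset.mem_filter.1 hy).1 hxy
  rcases hu' with rfl | ⟨h, -⟩
  · rcases hv' with rfl | ⟨h, -⟩
    · exact hadj
    · exact absurd h hya
  · exact absurd h hxa


/-- The set defining `Fv`, rephrased with `CliqueFree`/`Colorable`. -/
lemma mem_FvSet_iff {r q n : ℕ} :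
    (n ∈ {n | ∃ G : SimpleGraph (Fin n), G.cliqueNum < q ∧ r + 1 ≤ chi G}) ↔
      ∃ G : SimpleGraph (Fin n), G.CliqueFree q ∧ ¬ G.Colorable r := by
  constructor
  · rintro ⟨G, h1, h2⟩
    exact ⟨G, cliqueNum_lt_iff_cliqueFree.1 h1, chi_ge_iff.1 h2⟩
  · rintro ⟨G, h1, h2⟩
    exact ⟨G, cliqueNum_lt_iff_cliqueFree.2 h1, chi_ge_iff.2 h2⟩

end Aux

theorem stmt7 (r q : ℕ) (hq : 4 ≤ q) (hqr : q < r + 3)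
    (hR : RamseyTri (q - 1) ≤ Fv r q + 1) :
    Fv r q + 2 ≤ Fv r (q - 1) := by
  classical
  set k := Fv r q with hk
  set m := Fv r (q-1) with hm
  -- the Ramsey property set is nonempty
  obtain ⟨n₀, hn₀⟩ := ramsey_exists (q - 1)
  have hRamNE : {n | ∀ m, n ≤ m → ∀ G : SimpleGraph (Fin m),
      (∃ S : Finset (Fin m), G.IsNClique (q-1) S) ∨
      (∃ S : Finset (Fin m), Gᶜ.IsNClique 3 S)}.Nonempty :=
    ⟨n₀, fun m hm G => hn₀ (Fin m) inferInstance G (by rw [Fintype.card_fin]; exact hm)⟩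
  have Rprop := Nat.sInf_mem hRamNE
  rw [show sInf _ = RamseyTri (q-1) from rfl] at Rprop
  have h2r : 2 ≤ r := by omega
  -- the set defining `Fv r q` is nonempty
  have hSq : {n | ∃ G : SimpleGraph (Fin n), G.cliqueNum < q ∧ r + 1 ≤ chi G}.Nonempty := by
    by_contra hempty
    have h0 : k = 0 := by
      rw [hk, Fv, Set.not_nonempty_iff_eq_empty.1 hempty, Nat.sInf_empty]
    rcases Rprop 1 (by omega) ⊥ with ⟨S, hS⟩ | ⟨S, hS⟩
    · have h1 := hS.card_eq
      have h2 : S.card ≤ 1 := by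
        have := Finset.card_le_univ S
        simpa using this
      omega
    · have h1 := hS.card_eq
      have h2 : S.card ≤ 1 := by
        have := Finset.card_le_univ S
        simpa using this
      omega
  have hkmem : k ∈ {n | ∃ G : SimpleGraph (Fin n), G.cliqueNum < q ∧ r + 1 ≤ chi G} :=
    Nat.sInf_mem hSq
  have hk_ge : r + 1 ≤ k := by
    obtain ⟨G0, hG0c, hG0chi⟩ := hkmem
    have h1 : ¬ G0.Colorable r := chi_ge_iff.1 hG0chi
    by_contra h
    push_neg at h
    exact h1 ((G0.colorable_of_fintype).mono (by rw [Fintype.card_fin]; omega))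
  -- the set defining `Fv r (q-1)` is nonempty, thanks to the shift graph
  have hSq1 : {n | ∃ G : SimpleGraph (Fin n), G.cliqueNum < q - 1 ∧ r + 1 ≤ chi G}.Nonempty := by
    obtain ⟨H, hHfree, hHcol⟩ := to_fin (shiftGraph (2 ^ r + 1))
    refine ⟨_, mem_FvSet_iff.2 ⟨H, ?_, ?_⟩⟩
    · exact ((hHfree 3).2 (shiftGraph_cliqueFree _)).mono (by omega)
    · exact fun hc => shiftGraph_not_colorable r ((hHcol r).1 hc)
  have hmmem : m ∈ {n | ∃ G : SimpleGraph (Fin n), G.cliqueNum < q - 1 ∧ r + 1 ≤ chi G} :=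
    Nat.sInf_mem hSq1
  obtain ⟨G1, hG1free, hG1col⟩ := mem_FvSet_iff.1 hmmem
  have hm_ge_r : r + 1 ≤ m := by
    by_contra h
    push_neg at h
    exact hG1col ((G1.colorable_of_fintype).mono (by rw [Fintype.card_fin]; omega))
  have hm_ge_k : k ≤ m :=
    Nat.sInf_le (mem_FvSet_iff.2 ⟨G1, hG1free.mono (by omega), hG1col⟩)
  -- main argument
  by_contra hlt
  push_neg at hlt
  by_cases hindep : ∃ S : Finset (Fin m), G1ᶜ.IsNClique 3 S
  · -- contract an independent triple: get a witness on `m - 2` vertices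
    obtain ⟨S, hS⟩ := hindep
    have hcard3 : S.card = 3 := hS.card_eq
    have hSne : S.Nonempty := by rw [← Finset.card_pos, hcard3]; omega
    obtain ⟨a, ha⟩ := hSne
    have hind : ∀ x ∈ S, ∀ y ∈ S, ¬ G1.Adj x y := by
      intro x hx y hy hadj
      by_cases hxy : x = y
      · exact G1.loopless.irrefl y (hxy ▸ hadj)
      · have := hS.isClique hx hy hxy
        rw [SimpleGraph.compl_adj] at this
        exact this.2 hadj
    have hcc : Fintype.card {x : Fin m // x = a ∨ x ∉ S} = m - 2 := by
      rw [contract_card ha, Fintype.card_fin, hcard3]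
      omega
    have hmem2 : m - 2 ∈ {n | ∃ G : SimpleGraph (Fin n), G.cliqueNum < q ∧ r + 1 ≤ chi G} := by
      rw [← hcc]
      obtain ⟨H, hHfree, hHcol⟩ := to_fin (contract G1 S a)
      refine mem_FvSet_iff.2 ⟨H, ?_, ?_⟩
      · have := contract_cliqueFree (t := S) (a := a) hG1free
        rw [show q - 1 + 1 = q by omega] at this
        exact (hHfree q).2 this
      · exact fun hc => hG1col (contract_colorable ha hind ((hHcol r).1 hc))
    have hle : k ≤ m - 2 := Nat.sInf_le hmem2
    omega
  · -- no independent triple: `m = k` and we contract a non-edge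
    push_neg at hindep
    have hmR : m < RamseyTri (q - 1) := by
      by_contra hge
      push_neg at hge
      rcases Rprop m hge G1 with ⟨S, hS⟩ | ⟨S, hS⟩
      · exact hG1free S hS
      · exact hindep S hS
    have hpair : ∃ x y : Fin m, x ≠ y ∧ ¬ G1.Adj x y := by
      by_contra hc
      push_neg at hc
      have hqm : q - 1 ≤ (Finset.univ : Finset (Fin m)).card := by
        rw [Finset.card_univ, Fintype.card_fin]; omega
      obtain ⟨T, hT, hTc⟩ := Finset.exists_subset_card_eq hqm
      exact hG1free T ⟨fun x _ y _ hxy => hc x y hxy, hTc⟩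
    obtain ⟨x, y, hxy, hnadj⟩ := hpair
    have hind : ∀ u ∈ ({x, y} : Finset (Fin m)), ∀ v ∈ ({x, y} : Finset (Fin m)),
        ¬ G1.Adj u v := by
      intro u hu v hv hadj
      simp only [Finset.mem_insert, Finset.mem_singleton] at hu hv
      rcases hu with rfl | rfl <;> rcases hv with rfl | rfl
      · exact G1.loopless.irrefl _ hadj
      · exact hnadj hadj
      · exact hnadj hadj.symm
      · exact G1.loopless.irrefl _ hadj
    have hxt : x ∈ ({x, y} : Finset (Fin m)) := by simp
    have hcc : Fintype.card {z : Fin m // z = x ∨ z ∉ ({x, y} : Finset (Fin m))} = m - 1 := by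
      rw [contract_card hxt, Fintype.card_fin, Finset.card_pair hxy]
      omega
    have hmem1 : m - 1 ∈ {n | ∃ G : SimpleGraph (Fin n), G.cliqueNum < q ∧ r + 1 ≤ chi G} := by
      rw [← hcc]
      obtain ⟨H, hHfree, hHcol⟩ := to_fin (contract G1 ({x, y} : Finset (Fin m)) x)
      refine mem_FvSet_iff.2 ⟨H, ?_, ?_⟩
      · have := contract_cliqueFree (t := ({x, y} : Finset (Fin m))) (a := x) hG1free
        rw [show q - 1 + 1 = q by omega] at this
        exact (hHfree q).2 this
      · exact fun hc => hG1col (contract_colorable hxt hind ((hHcol r).1 hc))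
    have hle : k ≤ m - 1 := Nat.sInf_le hmem1
    omega
end

section
/- Let x ≥ 0 and y be integers, and let G_0 be a graph of minimum order in the nonempty family M(x,y) = {G : |V(G)| < χ(G) + 2f(G) − x and f(G) ≤ y}. If A is a nonempty independent set of vertices of G_0, then χ(G_0 − A) = χ(G_0) − 1 and cl(G_0 − A) = cl(G_0). -/
/-- `f(G) = χ(G) − cl(G)`. -/
noncomputable def fDiff {V : Type*} (G : SimpleGraph V) : ℕ := chi G - G.cliqueNum

/-- Membership in the family `M(x,y) = {G : |V(G)| < χ(G) + 2f(G) − x and f(G) ≤ y}`. -/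
def inM (x y : ℤ) {V : Type*} [Fintype V] (G : SimpleGraph V) : Prop :=
  (Fintype.card V : ℤ) < chi G + 2 * fDiff G - x ∧ (fDiff G : ℤ) ≤ y

/-- The set of orders of members of `M(x,y)`. -/
def McardSet (x y : ℤ) : Set ℕ := {n | ∃ G : SimpleGraph (Fin n), inM x y G}

open SimpleGraph

section Helpers

variable {V W : Type*}

lemma chi_colorable [Finite V] (G : SimpleGraph V) : G.Colorable (chi G) :=
  G.colorable_chromaticNumber_of_fintype

lemma chi_le_iff [Finite V] (G : SimpleGraph V) {n : ℕ} : chi G ≤ n ↔ G.Colorable n :=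
  ⟨fun h => (chi_colorable G).mono h, fun h => ENat.toNat_le_of_le_coe h.chromaticNumber_le⟩

lemma chi_le_card [Fintype V] (G : SimpleGraph V) : chi G ≤ Fintype.card V :=
  (chi_le_iff G).2 G.colorable_of_fintype

lemma chi_le_of_emb [Finite V] [Finite W] {G : SimpleGraph V} {G' : SimpleGraph W}
    (f : G ↪g G') : chi G ≤ chi G' :=
  (chi_le_iff G).2 (SimpleGraph.Colorable.of_hom f.toHom (chi_colorable G'))

lemma cliqueNum_le_of_emb [Fintype V] [Fintype W] {G : SimpleGraph V} {G' : SimpleGraph W}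
    (f : G ↪g G') : G.cliqueNum ≤ G'.cliqueNum := by
  obtain ⟨s, hs⟩ := G.exists_isNClique_cliqueNum
  have hmap : (G.map f.toEmbedding).IsNClique G.cliqueNum (s.map f.toEmbedding) := hs.map
  have hle : G.map f.toEmbedding ≤ G' := by
    intro a b hab
    simp only [map_adj] at hab
    obtain ⟨u, v, huv, rfl, rfl⟩ := hab
    exact f.map_rel_iff.2 huv
  have := (hmap.mono hle).isClique.card_le_cliqueNum
  simpa [hmap.card_eq] using this

lemma cliqueNum_le_chi [Fintype V] (G : SimpleGraph V) : G.cliqueNum ≤ chi G := by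
  obtain ⟨s, hs⟩ := G.exists_isNClique_cliqueNum
  have := hs.isClique.card_le_of_colorable (chi_colorable G)
  simpa [hs.card_eq] using this

lemma one_le_cliqueNum [Fintype V] [Nonempty V] (G : SimpleGraph V) : 1 ≤ G.cliqueNum := by
  obtain ⟨v⟩ := ‹Nonempty V›
  have : G.IsClique ({v} : Finset V) := by simp
  simpa using this.card_le_cliqueNum

lemma one_le_chi [Finite V] [Nonempty V] (G : SimpleGraph V) : 1 ≤ chi G := by
  by_contra h
  have h0 : chi G = 0 := by omega
  have : G.Colorable 0 := (chi_le_iff G).1 (le_of_eq h0)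
  exact (G.isEmpty_of_colorable_zero this).false ‹Nonempty V›.some

/-- Embedding between induced subgraphs on nested vertex sets. -/
def induceEmb (G : SimpleGraph V) {s t : Set V} (h : s ⊆ t) : G.induce s ↪g G.induce t where
  toFun v := ⟨v.1, h v.2⟩
  inj' := by rintro ⟨a, ha⟩ ⟨b, hb⟩ hab; simpa using hab
  map_rel_iff' := Iff.rfl

/-- The pullback of a graph along an equivalence is isomorphic to the graph. -/
def comapIso (G : SimpleGraph W) (e : V ≃ W) : G.comap e ≃g G where
  toEquiv := e
  map_rel_iff' := Iff.rfl

lemma chi_eq_of_iso [Finite V] [Finite W] {G : SimpleGraph V} {G' : SimpleGraph W}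
    (f : G ≃g G') : chi G = chi G' :=
  le_antisymm (chi_le_of_emb f.toEmbedding) (chi_le_of_emb f.symm.toEmbedding)

lemma cliqueNum_eq_of_iso [Fintype V] [Fintype W] {G : SimpleGraph V} {G' : SimpleGraph W}
    (f : G ≃g G') : G.cliqueNum = G'.cliqueNum :=
  le_antisymm (cliqueNum_le_of_emb f.toEmbedding) (cliqueNum_le_of_emb f.symm.toEmbedding)

lemma mem_McardSet {x y : ℤ} [Fintype W] (G : SimpleGraph W) (h : inM x y G) :
    Fintype.card W ∈ McardSet x y := by
  set e : Fin (Fintype.card W) ≃ W := (Fintype.equivFin W).symm with he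
  refine ⟨G.comap e, ?_⟩
  have hiso := comapIso G e
  have h1 : chi (G.comap ⇑e) = chi G := chi_eq_of_iso hiso
  have h2 : (G.comap ⇑e).cliqueNum = G.cliqueNum := cliqueNum_eq_of_iso hiso
  unfold inM fDiff at *
  rw [h1, h2, Fintype.card_fin]
  exact h

lemma chi_le_induce_compl_add_one [Finite V] (G : SimpleGraph V) (A : Set V)
    (hindep : ∀ u ∈ A, ∀ v ∈ A, ¬ G.Adj u v) :
    chi G ≤ chi (G.induce Aᶜ) + 1 := by
  classical
  set n := chi (G.induce Aᶜ) with hn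
  obtain ⟨c⟩ := chi_colorable (G.induce Aᶜ)
  refine (chi_le_iff G).2 ⟨Coloring.mk
    (fun v => if h : v ∈ A then Fin.last n else (c ⟨v, h⟩).castSucc) ?_⟩
  intro u v huv
  by_cases hu : u ∈ A <;> by_cases hv : v ∈ A <;> simp only [hu, hv, dif_pos, dif_neg,
    not_false_iff]
  · exact absurd huv (hindep u hu v hv)
  · exact (Fin.castSucc_lt_last _).ne'
  · exact (Fin.castSucc_lt_last _).ne
  · intro hc
    exact c.valid (by exact huv : (G.induce Aᶜ).Adj ⟨u, hu⟩ ⟨v, hv⟩)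
      (Fin.castSucc_injective _ |>.eq_iff.1 hc ▸ rfl)

lemma cliqueNum_induce_ge [Fintype V] {G : SimpleGraph V} {T : Set V} {s : Finset V}
    (hs : G.IsClique ↑s) (hsub : ∀ v ∈ s, v ∈ T) : s.card ≤ (G.induce T).cliqueNum := by
  classical
  have hclique : (G.induce T).IsClique ((s.subtype (· ∈ T) : Finset T) : Set T) := by
    intro a ha b hb hab
    rw [Finset.mem_coe, Finset.mem_subtype] at ha hb
    exact hs (Finset.mem_coe.mpr ha) (Finset.mem_coe.mpr hb) (fun h => hab (Subtype.ext h))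
  have hcard : (s.subtype (· ∈ T)).card = s.card := by
    rw [Finset.card_subtype, Finset.filter_true_of_mem hsub]
  calc s.card = (s.subtype (· ∈ T)).card := hcard.symm
    _ ≤ _ := hclique.card_le_cliqueNum

lemma cliqueNum_le_induce_compl_add_one [Fintype V] (G : SimpleGraph V) (A : Set V)
    (hindep : ∀ u ∈ A, ∀ v ∈ A, ¬ G.Adj u v) :
    G.cliqueNum ≤ (G.induce Aᶜ).cliqueNum + 1 := by
  classical
  obtain ⟨s, hs⟩ := G.exists_isNClique_cliqueNum
  have hfilter : (s.filter (· ∈ A)).card ≤ 1 := by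
    refine Finset.card_le_one.2 ?_
    intro u hu v hv
    simp only [Finset.mem_filter] at hu hv
    by_contra hne
    exact hindep u hu.2 v hv.2 (hs.isClique hu.1 hv.1 hne)
  have hsplit := Finset.card_filter_add_card_filter_not (s := s) (· ∈ A)
  have hge : (s.filter (¬ · ∈ A)).card ≤ (G.induce Aᶜ).cliqueNum := by
    refine cliqueNum_induce_ge (hs.isClique.subset ?_) ?_
    · intro v hv; exact (Finset.mem_filter.1 hv).1
    · intro v hv; exact (Finset.mem_filter.1 hv).2
  have := hs.card_eq
  omega

lemma chi_induce_lt_of_universal [Fintype V] [Nonempty V] (G : SimpleGraph V) (a : V)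
    (huniv : ∀ w, w ≠ a → G.Adj a w) :
    chi (G.induce ({a} : Set V)ᶜ) + 1 ≤ chi G := by
  classical
  obtain ⟨C⟩ := chi_colorable G
  have col : (G.induce ({a} : Set V)ᶜ).Coloring {c : Fin (chi G) // c ≠ C a} :=
    Coloring.mk
      (fun v => ⟨C ↑v, fun h =>
        (C.valid (huniv ↑v (by intro h'; exact v.2 (by simp [h'])))).symm h⟩)
      (by
        intro u v huv hc
        exact C.valid (by exact huv : G.Adj ↑u ↑v) (congrArg Subtype.val hc))
  have hcol := col.colorable
  have hcard : Fintype.card {c : Fin (chi G) // c ≠ C a} = chi G - 1 := by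
    simp [Fintype.card_subtype_compl]
  rw [hcard] at hcol
  have := (chi_le_iff _).2 hcol
  have h1 := one_le_chi G
  omega

variable [Fintype V] {x y : ℤ}

/-- Minimality: no proper induced subgraph of `G₀` lies in `M(x,y)`. -/
lemma noM (x y : ℤ) (G₀ : SimpleGraph V)
    (hmin : ∀ n ∈ McardSet x y, Fintype.card V ≤ n) (S : Set V) (hS : S.Nonempty)
    [Fintype ↥S] [Fintype ↥Sᶜ] (h : inM x y (G₀.induce Sᶜ)) : False := by
  have h1 : Fintype.card ↥Sᶜ ∈ McardSet x y := mem_McardSet _ h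
  have h2 := hmin _ h1
  have h3 : Fintype.card ↥Sᶜ = Fintype.card V - Fintype.card ↥S := Fintype.card_compl_set S
  have hpos : 0 < Fintype.card ↥S := Fintype.card_pos_iff.2 hS.to_subtype
  have hle : Fintype.card ↥S ≤ Fintype.card V := Fintype.card_le_of_injective _ Subtype.val_injective
  omega

lemma dichotomy (hx : 0 ≤ x) (G₀ : SimpleGraph V)
    (hG₀ : inM x y G₀) (hmin : ∀ n ∈ McardSet x y, Fintype.card V ≤ n)
    (A : Set V) (hA : A.Nonempty) (hindep : ∀ u ∈ A, ∀ v ∈ A, ¬ G₀.Adj u v) :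
    (chi (G₀.induce Aᶜ) = chi G₀ - 1 ∧ (G₀.induce Aᶜ).cliqueNum = G₀.cliqueNum) ∨
    (chi (G₀.induce Aᶜ) = chi G₀ ∧ (G₀.induce Aᶜ).cliqueNum = G₀.cliqueNum - 1) := by
  classical
  have hVne : Nonempty V := ⟨hA.some⟩
  obtain ⟨hcard, hfy⟩ := hG₀
  unfold fDiff at hcard hfy
  have hwc := cliqueNum_le_chi G₀
  have hc1 : 1 ≤ chi G₀ := one_le_chi G₀
  have hw1 := one_le_cliqueNum G₀
  have hccard := chi_le_card G₀
  have hc'le : chi (G₀.induce Aᶜ) ≤ chi G₀ := chi_le_of_emb (Embedding.induce Aᶜ)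
  have hcge : chi G₀ ≤ chi (G₀.induce Aᶜ) + 1 := chi_le_induce_compl_add_one G₀ A hindep
  have hw'le : (G₀.induce Aᶜ).cliqueNum ≤ G₀.cliqueNum :=
    cliqueNum_le_of_emb (Embedding.induce Aᶜ)
  have hwge : G₀.cliqueNum ≤ (G₀.induce Aᶜ).cliqueNum + 1 :=
    cliqueNum_le_induce_compl_add_one G₀ A hindep
  have hw'c' := cliqueNum_le_chi (G₀.induce Aᶜ)
  have hcompl : Fintype.card ↥Aᶜ = Fintype.card V - Fintype.card ↥A := Fintype.card_compl_set A
  have hApos : 0 < Fintype.card ↥A := Fintype.card_pos_iff.2 hA.to_subtype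
  have hnoM := noM x y G₀ hmin A hA
  rcases Nat.lt_or_ge (chi (G₀.induce Aᶜ)) (chi G₀) with hc | hc <;>
    rcases Nat.lt_or_ge ((G₀.induce Aᶜ).cliqueNum) (G₀.cliqueNum) with hw | hw
  · -- (c-1, w-1) : contradiction with minimality
    exact absurd (And.intro (by unfold fDiff; omega) (by unfold fDiff; omega) :
      inM x y (G₀.induce Aᶜ)) hnoM
  · -- (c-1, w) : goal
    left; omega
  · -- (c, w-1) : hard case
    right; omega
  · -- (c, w) : contradiction with minimality
    exact absurd (And.intro (by unfold fDiff; omega) (by unfold fDiff; omega) :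
      inM x y (G₀.induce Aᶜ)) hnoM

lemma hard_two (hx : 0 ≤ x) (G₀ : SimpleGraph V)
    (hG₀ : inM x y G₀) (hmin : ∀ n ∈ McardSet x y, Fintype.card V ≤ n)
    (A : Set V) (hA : A.Nonempty) (hindep : ∀ u ∈ A, ∀ v ∈ A, ¬ G₀.Adj u v)
    (a b : V) (ha : a ∈ A) (hb : b ∈ A) (hab : a ≠ b)
    (h1 : chi (G₀.induce Aᶜ) = chi G₀)
    (h2 : (G₀.induce Aᶜ).cliqueNum = G₀.cliqueNum - 1) : False := by
  classical
  have hVne : Nonempty V := ⟨a⟩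
  obtain ⟨hcard, hfy⟩ := hG₀
  unfold fDiff at hcard hfy
  have hwc := cliqueNum_le_chi G₀
  have hc1 : 1 ≤ chi G₀ := one_le_chi G₀
  have hw1 := one_le_cliqueNum G₀
  obtain ⟨s, hs⟩ := G₀.exists_isNClique_cliqueNum
  -- the maximum clique must meet A
  have hsA : ∃ a₀ ∈ s, a₀ ∈ A := by
    by_contra hno
    push_neg at hno
    have := cliqueNum_induce_ge (T := Aᶜ) hs.isClique (fun v hv => hno v hv)
    rw [hs.card_eq] at this
    omega
  obtain ⟨a₀, ha₀s, ha₀A⟩ := hsA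
  set A₁ : Set V := A \ {a₀} with hA₁
  have hA₁ne : A₁.Nonempty := by
    rcases eq_or_ne a a₀ with rfl | hne
    · exact ⟨b, hb, by simp [hab.symm]⟩
    · exact ⟨a, ha, by simp [hne]⟩
  have hssub : ∀ v ∈ s, v ∈ A₁ᶜ := by
    intro v hv
    simp only [hA₁, Set.mem_compl_iff, Set.mem_diff, Set.mem_singleton_iff, not_and, not_not]
    intro hvA
    by_contra hva₀
    exact hindep v hvA a₀ ha₀A (hs.isClique hv ha₀s hva₀)
  have hwA₁ : G₀.cliqueNum ≤ (G₀.induce A₁ᶜ).cliqueNum := by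
    have := cliqueNum_induce_ge hs.isClique hssub
    rwa [hs.card_eq] at this
  have hwA₁' : (G₀.induce A₁ᶜ).cliqueNum ≤ G₀.cliqueNum :=
    cliqueNum_le_of_emb (Embedding.induce A₁ᶜ)
  have hchiA₁ : chi (G₀.induce Aᶜ) ≤ chi (G₀.induce A₁ᶜ) :=
    chi_le_of_emb (induceEmb G₀ (Set.compl_subset_compl.2 Set.diff_subset))
  have hchiA₁' : chi (G₀.induce A₁ᶜ) ≤ chi G₀ := chi_le_of_emb (Embedding.induce A₁ᶜ)
  have hcompl : Fintype.card ↥A₁ᶜ = Fintype.card V - Fintype.card ↥A₁ :=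
    Fintype.card_compl_set A₁
  have hApos : 0 < Fintype.card ↥A₁ := Fintype.card_pos_iff.2 hA₁ne.to_subtype
  have hw'c' := cliqueNum_le_chi (G₀.induce A₁ᶜ)
  exact noM x y G₀ hmin A₁ hA₁ne
    (And.intro (by unfold fDiff; omega) (by unfold fDiff; omega))

lemma hard_one (hx : 0 ≤ x) (G₀ : SimpleGraph V)
    (hG₀ : inM x y G₀) (hmin : ∀ n ∈ McardSet x y, Fintype.card V ≤ n)
    (a : V)
    (h1 : chi (G₀.induce ({a} : Set V)ᶜ) = chi G₀)
    (h2 : (G₀.induce ({a} : Set V)ᶜ).cliqueNum = G₀.cliqueNum - 1) : False := by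
  classical
  have hVne : Nonempty V := ⟨a⟩
  have hc1 : 1 ≤ chi G₀ := one_le_chi G₀
  have hw1 := one_le_cliqueNum G₀
  have hnu : ∃ w₀, w₀ ≠ a ∧ ¬ G₀.Adj a w₀ := by
    by_contra h
    push_neg at h
    have := chi_induce_lt_of_universal G₀ a h
    omega
  obtain ⟨w₀, hw₀a, hw₀adj⟩ := hnu
  set B : Set V := {a, w₀} with hB
  have hBne : B.Nonempty := ⟨a, by simp [hB]⟩
  have hBindep : ∀ u ∈ B, ∀ v ∈ B, ¬ G₀.Adj u v := by
    intro u hu v hv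
    rcases hu with rfl | hu <;> rcases hv with rfl | hv
    · exact G₀.irrefl
    · rw [Set.mem_singleton_iff] at hv; subst hv; exact hw₀adj
    · rw [Set.mem_singleton_iff] at hu; subst hu
      intro hadj; exact hw₀adj hadj.symm
    · rw [Set.mem_singleton_iff] at hu hv; subst hu; subst hv; exact G₀.irrefl
  rcases dichotomy hx G₀ hG₀ hmin B hBne hBindep with ⟨hb1, hb2⟩ | ⟨hb1, hb2⟩
  · -- cliqueNum (induce Bᶜ) = cliqueNum G₀, contradiction with h2
    have hsub : Bᶜ ⊆ ({a} : Set V)ᶜ := Set.compl_subset_compl.2 (by simp [hB])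
    have hle : (G₀.induce Bᶜ).cliqueNum ≤ (G₀.induce ({a} : Set V)ᶜ).cliqueNum :=
      cliqueNum_le_of_emb (induceEmb G₀ hsub)
    omega
  · exact hard_two hx G₀ hG₀ hmin B hBne hBindep a w₀ (by simp [hB]) (by simp [hB])
      (Ne.symm hw₀a) hb1 hb2

end Helpers

theorem stmt12 {V : Type*} [Fintype V] (x y : ℤ) (hx : 0 ≤ x)
    (G₀ : SimpleGraph V) (hG₀ : inM x y G₀)
    (hmin : ∀ n ∈ McardSet x y, Fintype.card V ≤ n)
    (A : Set V) (hA : A.Nonempty) (hindep : ∀ u ∈ A, ∀ v ∈ A, ¬ G₀.Adj u v) :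
    chi (G₀.induce Aᶜ) = chi G₀ - 1 ∧ (G₀.induce Aᶜ).cliqueNum = G₀.cliqueNum := by
  classical
  rcases dichotomy hx G₀ hG₀ hmin A hA hindep with h | ⟨h1, h2⟩
  · exact h
  · exfalso
    by_cases htwo : ∃ a ∈ A, ∃ b ∈ A, a ≠ b
    · obtain ⟨a, ha, b, hb, hab⟩ := htwo
      exact hard_two hx G₀ hG₀ hmin A hA hindep a b ha hb hab h1 h2
    · push_neg at htwo
      obtain ⟨a, ha⟩ := hA
      have hAa : A = {a} := by
        ext b
        simp only [Set.mem_singleton_iff]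
        exact ⟨fun hb => htwo b hb a ha, fun hb => hb ▸ ha⟩
      rw [hAa] at h1 h2
      exact hard_one hx G₀ hG₀ hmin a h1 h2
end
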